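/- There are exactly three quandle structures on a three-element set up to isomorphism: the trivial quandle E_3, the dihedral quandle R_3, and the quandle P_3. -/
import Mathlib


/-- A quandle structure on a type. -/
structure QuandleStr (α : Type*) where
  op : α → α → α
  idem : ∀ x, op x x = x
  bij : ∀ y, Function.Bijective fun x => op x y
  distrib : ∀ x y z, op (op x y) z = op (op x z) (op y z)

/-- The trivial quandle E₃ on Fin 3. -/
def E3 : QuandleStr (Fin 3) where
  op x _ := x
  idem := by intro x; rfl
  bij := by intro y; exact Function.bijective_id
  distrib := by intros; rfl

/-- The dihedral quandle R₃ on Fin 3. -/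
def R3 : QuandleStr (Fin 3) where
  op x y := 2 * y - x
  idem := by decide
  bij := by decide
  distrib := by decide

/-- The quandle P₃ on Fin 3. -/
def P3 : QuandleStr (Fin 3) where
  op x y := if y = 0 then (if x = 1 then 2 else if x = 2 then 1 else 0) else x
  idem := by decide
  bij := by decide
  distrib := by decide

/-- Isomorphism of quandle structures on Fin 3. -/
def QIso (q₁ q₂ : QuandleStr (Fin 3)) : Prop :=
  ∃ e : Fin 3 ≃ Fin 3, ∀ x y, e (q₁.op x y) = q₂.op (e x) (e y)

def tbl (a00 a01 a02 a10 a11 a12 a20 a21 a22 : Fin 3) : Fin 3 → Fin 3 → Fin 3 :=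
  fun x y => ![![a00,a01,a02],![a10,a11,a12],![a20,a21,a22]] x y

set_option maxHeartbeats 10000000 in
lemma key9 : ∀ a00 a01 a02 a10 a11 a12 a20 a21 a22 : Fin 3,
    (∀ x, tbl a00 a01 a02 a10 a11 a12 a20 a21 a22 x x = x) →
    (∀ y, Function.Bijective fun x => tbl a00 a01 a02 a10 a11 a12 a20 a21 a22 x y) →
    (∀ x y z, tbl a00 a01 a02 a10 a11 a12 a20 a21 a22 (tbl a00 a01 a02 a10 a11 a12 a20 a21 a22 x y) z =
      tbl a00 a01 a02 a10 a11 a12 a20 a21 a22 (tbl a00 a01 a02 a10 a11 a12 a20 a21 a22 x z) (tbl a00 a01 a02 a10 a11 a12 a20 a21 a22 y z)) →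
    (∃ e : Fin 3 ≃ Fin 3, ∀ x y, e (tbl a00 a01 a02 a10 a11 a12 a20 a21 a22 x y) = E3.op (e x) (e y)) ∨
    (∃ e : Fin 3 ≃ Fin 3, ∀ x y, e (tbl a00 a01 a02 a10 a11 a12 a20 a21 a22 x y) = R3.op (e x) (e y)) ∨
    (∃ e : Fin 3 ≃ Fin 3, ∀ x y, e (tbl a00 a01 a02 a10 a11 a12 a20 a21 a22 x y) = P3.op (e x) (e y)) := by
  decide

lemma key (q : QuandleStr (Fin 3)) : QIso q E3 ∨ QIso q R3 ∨ QIso q P3 := by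
  have hop : q.op = tbl (q.op 0 0) (q.op 0 1) (q.op 0 2) (q.op 1 0) (q.op 1 1) (q.op 1 2)
      (q.op 2 0) (q.op 2 1) (q.op 2 2) := by
    funext x y
    fin_cases x <;> fin_cases y <;> rfl
  unfold QIso
  rw [hop]
  exact key9 _ _ _ _ _ _ _ _ _ (hop ▸ q.idem) (hop ▸ q.bij) (hop ▸ q.distrib)

/-- There are exactly three quandles on a three-element set up to isomorphism:
E₃, R₃, and P₃. -/
theorem three_element_quandle_classification :
    (∀ q : QuandleStr (Fin 3), QIso q E3 ∨ QIso q R3 ∨ QIso q P3) ∧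
    ¬QIso E3 R3 ∧ ¬QIso E3 P3 ∧ ¬QIso R3 P3 := by
  refine ⟨key, ?_, ?_, ?_⟩ <;> · unfold QIso; decide
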